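/- For every k \in \mathbb{N}_0, \zeta^{des}(-k) = (-1)^k \sum_{i+j=k} \binom{k}{i} B_i \, \zeta_{EMS}(-j), where B_i are the Bernoulli numbers, \zeta^{des}(-k) := k! times the coefficient of (-t)^k in ((1-t)e^t-1)/(e^t-1)^2, and \zeta_{EMS}(-j) := j! times the coefficient of (-t)^j in (t-(e^t-1))/(t(e^t-1)). -/

import Mathlib

/-- The depth-one value attached to a one-variable power series `f`:
`k!` times the coefficient of `(-t)^k` in `f`. -/
noncomputable def zetaOne (f : PowerSeries ℚ) (k : ℕ) : ℚ :=
  (-1 : ℚ) ^ k * (k.factorial : ℚ) * PowerSeries.coeff k f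

open PowerSeries in
lemma key_factor (F G : PowerSeries ℚ)
    (hF : (PowerSeries.exp ℚ - 1) ^ 2 * F =
      (1 - PowerSeries.X) * PowerSeries.exp ℚ - 1)
    (hG : (PowerSeries.X * (PowerSeries.exp ℚ - 1)) * G =
      PowerSeries.X - (PowerSeries.exp ℚ - 1)) :
    F = bernoulliPowerSeries ℚ * PowerSeries.rescale (-1) G := by
  have hE : (PowerSeries.exp ℚ - 1) ≠ 0 := by
    intro h
    have := congrArg (PowerSeries.coeff 1) h
    simp [PowerSeries.coeff_exp] at this
  have hE2 : ((PowerSeries.exp ℚ - 1)) ^ 2 ≠ 0 := pow_ne_zero _ hE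
  apply mul_left_cancel₀ hE2
  rw [hF]
  -- apply rescale(-1) to hG
  have hG' := congrArg (PowerSeries.rescale (-1 : ℚ)) hG
  simp only [map_mul, map_sub, PowerSeries.rescale_neg_one_X, map_one] at hG'
  -- hG' : (-X) * (rescale(-1)(exp) - 1) * rescale(-1) G = -X - (rescale(-1)(exp) - 1)
  have hexp : PowerSeries.exp ℚ * PowerSeries.rescale (-1) (PowerSeries.exp ℚ) = 1 :=
    PowerSeries.exp_mul_exp_neg_eq_one
  set E := PowerSeries.exp ℚ - 1 with hEdef
  set E' := PowerSeries.rescale (-1 : ℚ) (PowerSeries.exp ℚ) - 1 with hE'def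
  set G' := PowerSeries.rescale (-1 : ℚ) G with hG'def
  -- E' * exp = -E  (since exp * rescale(-1) exp = 1)
  have hEE' : E' * PowerSeries.exp ℚ = -E := by
    rw [hE'def, hEdef, sub_mul, one_mul, mul_comm, hexp]
    ring
  -- from hG' : (-X) * E' * G' = -X - E'
  have h1 : PowerSeries.X * E' * G' * PowerSeries.exp ℚ
      = (PowerSeries.X + E') * PowerSeries.exp ℚ := by
    linear_combination (-(PowerSeries.exp ℚ)) * hG' 
  -- hence X * (-E) * G' = X * exp + (-E)
  have h3 : PowerSeries.X * E * G' = E - PowerSeries.X * PowerSeries.exp ℚ := by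
    have h4 : PowerSeries.X * (E' * PowerSeries.exp ℚ) * G'
        = PowerSeries.X * PowerSeries.exp ℚ + E' * PowerSeries.exp ℚ := by
      linear_combination h1
    rw [hEE'] at h4
    linear_combination -h4
  have hB : bernoulliPowerSeries ℚ * E = PowerSeries.X := by
    rw [hEdef]; exact bernoulliPowerSeries_mul_exp_sub_one ℚ
  symm
  calc E ^ 2 * (bernoulliPowerSeries ℚ * G')
      = (bernoulliPowerSeries ℚ * E) * E * G' := by ring
    _ = PowerSeries.X * E * G' := by rw [hB]
    _ = E - PowerSeries.X * PowerSeries.exp ℚ := h3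
    _ = (1 - PowerSeries.X) * PowerSeries.exp ℚ - 1 := by rw [hEdef]; ring

/-- For every `k ∈ ℕ₀`, `ζ^{des}(-k) = (-1)^k ∑_{i+j=k} C(k,i) B_i ζ_{EMS}(-j)`,
with `ζ^{des}`, `ζ_{EMS}` the coefficient extractions from
`F(t) = ((1-t)e^t-1)/(e^t-1)^2` and `G(t) = (t-(e^t-1))/(t(e^t-1))`. -/
theorem zetaDes_eq_sum_zetaEMS (F G : PowerSeries ℚ)
    (hF : (PowerSeries.exp ℚ - 1) ^ 2 * F =
      (1 - PowerSeries.X) * PowerSeries.exp ℚ - 1)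
    (hG : (PowerSeries.X * (PowerSeries.exp ℚ - 1)) * G =
      PowerSeries.X - (PowerSeries.exp ℚ - 1)) (k : ℕ) :
    zetaOne F k =
      (-1 : ℚ) ^ k * ∑ m ∈ Finset.HasAntidiagonal.antidiagonal k,
        (k.choose m.1 : ℚ) * bernoulli m.1 * zetaOne G m.2 := by
  have hfac := key_factor F G hF hG
  have hcoeff : PowerSeries.coeff k F
      = ∑ m ∈ Finset.HasAntidiagonal.antidiagonal k,
        (bernoulli m.1 / m.1.factorial) * ((-1 : ℚ) ^ m.2 * PowerSeries.coeff m.2 G) := by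
    rw [hfac, PowerSeries.coeff_mul]
    refine Finset.sum_congr rfl fun m hm => ?_
    rw [PowerSeries.coeff_rescale]
    simp [bernoulliPowerSeries]
  rw [zetaOne, hcoeff, Finset.mul_sum, Finset.mul_sum]
  refine Finset.sum_congr rfl fun m hm => ?_
  rw [Finset.HasAntidiagonal.mem_antidiagonal] at hm
  rw [zetaOne]
  have hkf : (k.factorial : ℚ) = (k.choose m.1 : ℚ) * m.1.factorial * m.2.factorial := by
    have h := Nat.choose_mul_factorial_mul_factorial (show m.1 ≤ k by omega)
    have h2 : k - m.1 = m.2 := by omega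
    rw [h2] at h
    exact_mod_cast h.symm
  have hfacne : (m.1.factorial : ℚ) ≠ 0 := Nat.cast_ne_zero.mpr m.1.factorial_ne_zero
  field_simp [hkf]
  rw [hkf]
  ring
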